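/- The spectrum of the adjacency operator L on the rooted binary tree equals the interval [−2√2, 2√2]. -/

import Mathlib

/-- Adjacency on the binary tree V = List Bool (root [], children of v are b::v). -/
def TreeAdj (v w : List Bool) : Prop := (∃ b, w = b :: v) ∨ (∃ b, v = b :: w)

open Complex
open scoped ENNReal

namespace TreeProof
noncomputable section


abbrev V := List Bool
abbrev H := lp (fun _ : V => ℂ) 2

def par (φ : V → ℂ) : V → ℂ
  | [] => 0
  | _ :: u => φ u

lemma cons_inj : Function.Injective (fun p : Bool × V => p.1 :: p.2) := by
  rintro ⟨b, u⟩ ⟨c, v⟩ h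
  simp only [List.cons.injEq] at h
  simp [h.1, h.2]

lemma cons_inj' (b : Bool) : Function.Injective (fun v : V => b :: v) := by
  intro u v h; simpa using h

lemma toReal_two : ((2 : ℝ≥0∞)).toReal = (2 : ℝ) := by norm_num

lemma sumsq (φ : H) : Summable fun v : V => ‖φ v‖ ^ 2 := by
  have h := (lp.memℓp φ).summable (by norm_num : 0 < ((2 : ℝ≥0∞)).toReal)
  rw [toReal_two] at h
  have : ∀ v : V, ‖φ v‖ ^ (2 : ℝ) = ‖φ v‖ ^ (2 : ℕ) := fun v => by
    rw [← Real.rpow_natCast] ; norm_num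
  simpa [this] using h

lemma memℓp_of_sq {f : V → ℂ} (h : Summable fun v => ‖f v‖ ^ 2) : Memℓp f 2 := by
  apply memℓp_gen
  rw [toReal_two]
  have : ∀ v : V, ‖f v‖ ^ (2 : ℝ) = ‖f v‖ ^ (2 : ℕ) := fun v => by
    rw [← Real.rpow_natCast] ; norm_num
  simpa [this] using h

lemma norm_sq_eq (φ : H) : ‖φ‖ ^ 2 = ∑' v : V, ‖φ v‖ ^ 2 := by
  have h := lp.norm_rpow_eq_tsum (by norm_num : 0 < ((2 : ℝ≥0∞)).toReal) φ
  rw [toReal_two] at h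
  have h1 : ‖φ‖ ^ (2 : ℝ) = ‖φ‖ ^ (2 : ℕ) := by rw [← Real.rpow_natCast]; norm_num
  have h2 : ∀ v : V, ‖φ v‖ ^ (2 : ℝ) = ‖φ v‖ ^ (2 : ℕ) := fun v => by
    rw [← Real.rpow_natCast]; norm_num
  rw [h1, funext h2] at h
  exact h

lemma summable_par_sq (φ : H) : Summable fun v : V => ‖par (⇑φ) v‖ ^ 2 := by
  have hP : Summable fun p : Bool × V => ‖φ p.2‖ ^ 2 := by
    refine (summable_prod_of_nonneg (fun p => by positivity)).2 ⟨fun b => sumsq φ, ?_⟩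
    exact (hasSum_fintype _).summable
  refine (Function.Injective.summable_iff cons_inj ?_).mp ?_
  · intro v hv
    cases v with
    | nil => simp [par]
    | cons b u => exact absurd ⟨(b, u), rfl⟩ hv
  · exact hP

lemma summable_mul_sq {a b : V → ℂ} (ha : Summable fun v => ‖a v‖ ^ 2)
    (hb : Summable fun v => ‖b v‖ ^ 2) :
    Summable fun v => (starRingEnd ℂ) (a v) * b v := by
  refine Summable.of_norm_bounded (g := fun v => (‖a v‖ ^ 2 + ‖b v‖ ^ 2) / 2)
    (((ha.add hb).div_const 2)) (fun v => ?_)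
  rw [norm_mul, RingHomIsometric.norm_map]
  nlinarith [norm_nonneg (a v), norm_nonneg (b v), sq_nonneg (‖a v‖ - ‖b v‖)]


lemma sq_add_le (a b : ℂ) : ‖a + b‖ ^ 2 ≤ 2 * (‖a‖ ^ 2 + ‖b‖ ^ 2) := by
  nlinarith [norm_add_le a b, norm_nonneg a, norm_nonneg b, sq_nonneg (‖a‖ - ‖b‖),
    norm_nonneg (a + b)]

lemma summable_child_sq (φ : H) :
    Summable fun v : V => ‖φ (false :: v) + φ (true :: v)‖ ^ 2 := by
  have h1 : Summable fun v : V => ‖φ (false :: v)‖ ^ 2 :=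
    (sumsq φ).comp_injective (cons_inj' false)
  have h2 : Summable fun v : V => ‖φ (true :: v)‖ ^ 2 :=
    (sumsq φ).comp_injective (cons_inj' true)
  exact Summable.of_nonneg_of_le (fun v => by positivity)
    (fun v => sq_add_le _ _) ((h1.add h2).mul_left 2)

lemma tsum_split (K : V → ℂ) (hK : Summable K) (h0 : K [] = 0) :
    ∑' v : V, K v = (∑' v : V, K (false :: v)) + (∑' v : V, K (true :: v)) := by
  have hsupp : Function.support K ⊆ Set.range (fun p : Bool × V => p.1 :: p.2) := by
    intro v hv
    cases v with
    | nil => exact absurd h0 hv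
    | cons b u => exact ⟨(b, u), rfl⟩
  have h1 : ∑' p : Bool × V, K (p.1 :: p.2) = ∑' v : V, K v :=
    cons_inj.tsum_eq hsupp
  have hs : Summable fun p : Bool × V => K (p.1 :: p.2) := hK.comp_injective cons_inj
  have h2 : ∑' p : Bool × V, K (p.1 :: p.2) = ∑' b : Bool, ∑' v : V, K (b :: v) :=
    Summable.tsum_prod' hs (fun b => hK.comp_injective (cons_inj' b))
  rw [← h1, h2, tsum_bool]

lemma tsum_split_le (F : V → ℝ) (hF : Summable F) (h0 : ∀ v, 0 ≤ F v) :
    (∑' v : V, F (false :: v)) + (∑' v : V, F (true :: v)) ≤ ∑' v : V, F v := by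
  have hs : Summable fun p : Bool × V => F (p.1 :: p.2) := hF.comp_injective cons_inj
  have h2 : ∑' p : Bool × V, F (p.1 :: p.2) = ∑' b : Bool, ∑' v : V, F (b :: v) :=
    Summable.tsum_prod' hs (fun b => hF.comp_injective (cons_inj' b))
  rw [tsum_bool] at h2
  rw [← h2]
  exact Summable.tsum_le_tsum_of_inj _ cons_inj (fun c _ => h0 c) (fun p => le_rfl) hs hF

lemma tsum_par_sq (φ : H) :
    ∑' v : V, ‖par (⇑φ) v‖ ^ 2 = 2 * ∑' v : V, ‖φ v‖ ^ 2 := by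
  have hsupp : Function.support (fun v : V => ‖par (⇑φ) v‖ ^ 2)
      ⊆ Set.range (fun p : Bool × V => p.1 :: p.2) := by
    intro v hv
    cases v with
    | nil => simp [par] at hv
    | cons b u => exact ⟨(b, u), rfl⟩
  have h1 : ∑' p : Bool × V, ‖par (⇑φ) (p.1 :: p.2)‖ ^ 2 = ∑' v : V, ‖par (⇑φ) v‖ ^ 2 :=
    cons_inj.tsum_eq hsupp
  have hs : Summable fun p : Bool × V => ‖par (⇑φ) (p.1 :: p.2)‖ ^ 2 :=
    (summable_par_sq φ).comp_injective cons_inj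
  have h2 : ∑' p : Bool × V, ‖par (⇑φ) (p.1 :: p.2)‖ ^ 2
      = ∑' b : Bool, ∑' v : V, ‖par (⇑φ) (b :: v)‖ ^ 2 :=
    Summable.tsum_prod' hs (fun b => (summable_par_sq φ).comp_injective (cons_inj' b))
  have h3 : ∀ (b : Bool) (v : V), par (⇑φ) (b :: v) = φ v := fun _ _ => rfl
  rw [← h1, h2, tsum_bool]
  simp only [h3]
  ring

section Op

variable (L : H →L[ℂ] H)
lemma opNorm_bound (hL' : ∀ (φ : H) (v : V),
      L φ v = φ (false :: v) + φ (true :: v) + par (⇑φ) v) :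
    ‖L‖ ≤ 2 * Real.sqrt 2 := by
  refine L.opNorm_le_bound (by positivity) (fun φ => ?_)
  set X : H := ⟨fun v => φ (false :: v) + φ (true :: v), memℓp_of_sq (summable_child_sq φ)⟩
    with hXdef
  set Y : H := ⟨par (⇑φ), memℓp_of_sq (summable_par_sq φ)⟩ with hYdef
  have hXc : ∀ v, X v = φ (false :: v) + φ (true :: v) := fun v => rfl
  have hYc : ∀ v, Y v = par (⇑φ) v := fun v => rfl
  have hXY : L φ = X + Y := by
    apply lp.ext
    funext v
    rw [lp.coeFn_add]
    simp only [Pi.add_apply, hXc, hYc, hL' φ v]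
  have hX2 : ‖X‖ ^ 2 ≤ 2 * ‖φ‖ ^ 2 := by
    rw [norm_sq_eq, norm_sq_eq]
    have maj : Summable fun v : V => 2 * (‖φ (false :: v)‖ ^ 2 + ‖φ (true :: v)‖ ^ 2) :=
      (((sumsq φ).comp_injective (cons_inj' false)).add
        ((sumsq φ).comp_injective (cons_inj' true))).mul_left 2
    calc ∑' v : V, ‖X v‖ ^ 2
        ≤ ∑' v : V, 2 * (‖φ (false :: v)‖ ^ 2 + ‖φ (true :: v)‖ ^ 2) := by
          refine Summable.tsum_le_tsum (fun v => ?_) (by simpa only [hXc] using summable_child_sq φ) maj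
          rw [hXc]; exact sq_add_le _ _
      _ = 2 * ((∑' v : V, ‖φ (false :: v)‖ ^ 2) + ∑' v : V, ‖φ (true :: v)‖ ^ 2) := by
          rw [tsum_mul_left]
          congr 1
          exact Summable.tsum_add ((sumsq φ).comp_injective (cons_inj' false))
            ((sumsq φ).comp_injective (cons_inj' true))
      _ ≤ 2 * ∑' v : V, ‖φ v‖ ^ 2 := by
          have := tsum_split_le (fun v => ‖φ v‖ ^ 2) (sumsq φ) (fun v => by positivity)
          linarith
  have hY2 : ‖Y‖ ^ 2 ≤ 2 * ‖φ‖ ^ 2 := by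
    rw [norm_sq_eq, norm_sq_eq]
    have := tsum_par_sq φ
    simp only [hYc]
    rw [show (fun v : V => ‖Y v‖ ^ 2) = fun v : V => ‖par (⇑φ) v‖ ^ 2 from rfl]
    linarith [this.le]
  have key : ∀ Z : H, ‖Z‖ ^ 2 ≤ 2 * ‖φ‖ ^ 2 → ‖Z‖ ≤ Real.sqrt 2 * ‖φ‖ := by
    intro Z hZ
    have h1 : (0:ℝ) ≤ Real.sqrt 2 * ‖φ‖ := by positivity
    nlinarith [Real.sq_sqrt (by norm_num : (0:ℝ) ≤ 2), norm_nonneg Z, Real.sqrt_nonneg 2,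
      norm_nonneg φ]
  calc ‖L φ‖ = ‖X + Y‖ := by rw [hXY]
    _ ≤ ‖X‖ + ‖Y‖ := norm_add_le _ _
    _ ≤ Real.sqrt 2 * ‖φ‖ + Real.sqrt 2 * ‖φ‖ := add_le_add (key X hX2) (key Y hY2)
    _ = 2 * Real.sqrt 2 * ‖φ‖ := by ring

lemma selfAdjoint_L
    (hL' : ∀ (φ : H) (v : V), L φ v = φ (false :: v) + φ (true :: v) + par (⇑φ) v) :
    IsSelfAdjoint L := by
  rw [ContinuousLinearMap.isSelfAdjoint_iff']
  refine ((ContinuousLinearMap.eq_adjoint_iff L L).mpr ?_).symm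
  intro φ ψ
  rw [lp.inner_eq_tsum, lp.inner_eq_tsum]
  simp only [RCLike.inner_apply']
  have S1 : Summable fun v : V => (starRingEnd ℂ) (φ (false :: v)) * ψ v :=
    summable_mul_sq ((sumsq φ).comp_injective (cons_inj' false)) (sumsq ψ)
  have S2 : Summable fun v : V => (starRingEnd ℂ) (φ (true :: v)) * ψ v :=
    summable_mul_sq ((sumsq φ).comp_injective (cons_inj' true)) (sumsq ψ)
  have S3 : Summable fun v : V => (starRingEnd ℂ) (par (⇑φ) v) * ψ v :=
    summable_mul_sq (summable_par_sq φ) (sumsq ψ)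
  have T1 : Summable fun v : V => (starRingEnd ℂ) (φ v) * ψ (false :: v) :=
    summable_mul_sq (sumsq φ) ((sumsq ψ).comp_injective (cons_inj' false))
  have T2 : Summable fun v : V => (starRingEnd ℂ) (φ v) * ψ (true :: v) :=
    summable_mul_sq (sumsq φ) ((sumsq ψ).comp_injective (cons_inj' true))
  have T3 : Summable fun v : V => (starRingEnd ℂ) (φ v) * par (⇑ψ) v :=
    summable_mul_sq (sumsq φ) (summable_par_sq ψ)
  have e1 : ∀ v : V, (starRingEnd ℂ) ((L φ) v) * ψ v
      = ((starRingEnd ℂ) (φ (false :: v)) * ψ v + (starRingEnd ℂ) (φ (true :: v)) * ψ v)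
        + (starRingEnd ℂ) (par (⇑φ) v) * ψ v := by
    intro v; rw [hL' φ v]; simp only [map_add]; ring
  have e2 : ∀ v : V, (starRingEnd ℂ) (φ v) * (L ψ) v
      = ((starRingEnd ℂ) (φ v) * ψ (false :: v) + (starRingEnd ℂ) (φ v) * ψ (true :: v))
        + (starRingEnd ℂ) (φ v) * par (⇑ψ) v := by
    intro v; rw [hL' ψ v]; ring
  rw [tsum_congr e1, Summable.tsum_add (S1.add S2) S3, Summable.tsum_add S1 S2,
    tsum_congr e2, Summable.tsum_add (T1.add T2) T3, Summable.tsum_add T1 T2]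
  have hS3 : ∑' v : V, (starRingEnd ℂ) (par (⇑φ) v) * ψ v
      = (∑' v : V, (starRingEnd ℂ) (φ v) * ψ (false :: v))
        + ∑' v : V, (starRingEnd ℂ) (φ v) * ψ (true :: v) := by
    exact tsum_split _ S3 (by simp [par])
  have hT3 : ∑' v : V, (starRingEnd ℂ) (φ v) * par (⇑ψ) v
      = (∑' v : V, (starRingEnd ℂ) (φ (false :: v)) * ψ v)
        + ∑' v : V, (starRingEnd ℂ) (φ (true :: v)) * ψ v := by
    exact tsum_split _ T3 (by simp [par])
  rw [hS3, hT3]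
  ring

end Op





lemma adj_set_nil : {w : V | TreeAdj [] w} = (({[false], [true]} : Finset V) : Set V) := by
  ext w
  simp only [Set.mem_setOf_eq, TreeAdj, Finset.coe_insert, Finset.coe_singleton,
    Set.mem_insert_iff, Set.mem_singleton_iff]
  constructor
  · rintro (⟨b, rfl⟩ | ⟨b, h⟩)
    · cases b <;> simp
    · simp at h
  · rintro (rfl | rfl)
    · exact Or.inl ⟨false, rfl⟩
    · exact Or.inl ⟨true, rfl⟩

lemma adj_set_cons (c : Bool) (u : V) :
    {w : V | TreeAdj (c :: u) w}
      = (({false :: c :: u, true :: c :: u, u} : Finset V) : Set V) := by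
  ext w
  simp only [Set.mem_setOf_eq, TreeAdj, Finset.coe_insert, Finset.coe_singleton,
    Set.mem_insert_iff, Set.mem_singleton_iff]
  constructor
  · rintro (⟨b, rfl⟩ | ⟨b, h⟩)
    · cases b <;> simp
    · right; right; injection h with h1 h2; exact h2.symm
  · rintro (rfl | rfl | rfl)
    · exact Or.inl ⟨false, rfl⟩
    · exact Or.inl ⟨true, rfl⟩
    · exact Or.inr ⟨c, rfl⟩

lemma tsum_adj (φ : V → ℂ) (v : V) :
    ∑' w : {w : V // TreeAdj v w}, φ w = φ (false :: v) + φ (true :: v) + par φ v := by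
  cases v with
  | nil =>
    have h : ∑' w : {w : V // TreeAdj [] w}, φ w
        = ∑ w ∈ ({[false], [true]} : Finset V), φ w := by
      rw [← Finset.tsum_subtype' (({[false], [true]} : Finset V)) φ]
      exact (Equiv.setCongr adj_set_nil).tsum_eq
        (fun w : ((({[false], [true]} : Finset V) : Set V)) => φ ↑w)
    rw [h, Finset.sum_insert (by simp), Finset.sum_singleton, par]
    ring
  | cons c u =>
    have h : ∑' w : {w : V // TreeAdj (c :: u) w}, φ w
        = ∑ w ∈ ({false :: c :: u, true :: c :: u, u} : Finset V), φ w := by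
      rw [← Finset.tsum_subtype' (({false :: c :: u, true :: c :: u, u} : Finset V)) φ]
      exact (Equiv.setCongr (adj_set_cons c u)).tsum_eq
        (fun w : ((({false :: c :: u, true :: c :: u, u} : Finset V) : Set V)) => φ ↑w)
    have h1 : (false : Bool) :: c :: u ∉ ({true :: c :: u, u} : Finset V) := by
      simp only [Finset.mem_insert, Finset.mem_singleton]
      push_neg
      refine ⟨by simp, fun hh => ?_⟩
      apply_fun List.length at hh
      simp at hh; omega
    have h2 : (true : Bool) :: c :: u ∉ ({u} : Finset V) := by
      simp only [Finset.mem_singleton]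
      intro hh
      apply_fun List.length at hh
      simp at hh; omega
    rw [h, Finset.sum_insert h1, Finset.sum_insert h2, Finset.sum_singleton, par]
    ring





/-- The set of vertices at depth `n`. -/
def lvl : ℕ → Finset V
  | 0 => {([] : V)}
  | n + 1 => (lvl n).image (List.cons false) ∪ (lvl n).image (List.cons true)

lemma mem_lvl : ∀ (n : ℕ) (v : V), v ∈ lvl n ↔ v.length = n := by
  intro n
  induction n with
  | zero => intro v; cases v <;> simp [lvl]
  | succ n ih =>
    intro v
    cases v with
    | nil => simp [lvl]
    | cons b u => cases b <;> simp [lvl, ih]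

lemma card_lvl (n : ℕ) : (lvl n).card = 2 ^ n := by
  induction n with
  | zero => simp [lvl]
  | succ n ih =>
    have hdisj : Disjoint ((lvl n).image (List.cons false)) ((lvl n).image (List.cons true)) := by
      simp only [Finset.disjoint_left, Finset.mem_image]
      rintro v ⟨u, _, rfl⟩ ⟨u', _, h⟩
      simp at h
    rw [lvl, Finset.card_union_of_disjoint hdisj,
      Finset.card_image_of_injective _ (cons_inj' false),
      Finset.card_image_of_injective _ (cons_inj' true), ih]
    ring

section Weyl

variable (θ : ℝ)

def g (n : ℕ) : ℝ := Real.sin ((n + 1) * θ)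

def rr : ℝ := (Real.sqrt 2)⁻¹

lemma sqrt2_pos : (0:ℝ) < Real.sqrt 2 := Real.sqrt_pos.mpr (by norm_num)

lemma sqrt2_mul_rr : Real.sqrt 2 * rr = 1 := mul_inv_cancel₀ (ne_of_gt sqrt2_pos)

lemma rr_sq : rr ^ 2 = 1 / 2 := by
  rw [rr, inv_pow, Real.sq_sqrt (by norm_num : (0:ℝ) ≤ 2)]
  norm_num

lemma two_mul_rr : 2 * rr = Real.sqrt 2 := by
  rw [rr]
  have h := sqrt2_pos
  have h2 : Real.sqrt 2 * Real.sqrt 2 = 2 := Real.mul_self_sqrt (by norm_num)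
  field_simp
  all_goals linarith [h2]

lemma g_rec (n : ℕ) : g θ n + g θ (n + 2) = 2 * Real.cos θ * g θ (n + 1) := by
  unfold g
  push_cast
  have h1 : ((n : ℝ) + 2 + 1) * θ = ((n : ℝ) + 1 + 1) * θ + θ := by ring
  have h2 : ((n : ℝ) + 1) * θ = ((n : ℝ) + 1 + 1) * θ - θ := by ring
  rw [h1, h2, Real.sin_add, Real.sin_sub]
  ring

lemma g_sq_le_one (n : ℕ) : g θ n ^ 2 ≤ 1 := Real.sin_sq_le_one _

def lam : ℝ := 2 * Real.sqrt 2 * Real.cos θ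

variable (N : ℕ)

def wr (n : ℕ) : ℝ := if n ≤ N then rr ^ n * g θ n else 0

def er (n : ℕ) : ℝ :=
  if n = N then -(Real.sqrt 2 * rr ^ N * g θ (N + 1))
  else if n = N + 1 then rr ^ N * g θ N else 0

lemma root_id (hN : 1 ≤ N) : 2 * wr θ N 1 - lam θ * wr θ N 0 = er θ N 0 := by
  have h0 : er θ N 0 = 0 := by
    unfold er
    rw [if_neg (by omega), if_neg (by omega)]
  rw [h0]
  unfold wr
  rw [if_pos hN, if_pos (Nat.zero_le N)]
  unfold g lam
  push_cast
  rw [show ((1:ℝ) + 1) * θ = 2 * θ by ring, show ((0:ℝ) + 1) * θ = θ by ring,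
    Real.sin_two_mul, pow_one, pow_zero]
  linear_combination (2 * Real.sin θ * Real.cos θ) * two_mul_rr

lemma main_rec (hN : 1 ≤ N) (m : ℕ) :
    2 * wr θ N (m + 2) + wr θ N m - lam θ * wr θ N (m + 1) = er θ N (m + 1) := by
  have key := g_rec θ m
  have h2 : Real.sqrt 2 * rr = 1 := sqrt2_mul_rr
  have h3 : rr ^ 2 = 1 / 2 := rr_sq
  rcases lt_trichotomy (m + 1) N with h | h | h
  · unfold wr er
    rw [if_pos (by omega), if_pos (by omega), if_pos (by omega),
      if_neg (by omega), if_neg (by omega)]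
    have e1 : rr ^ (m + 2) = rr ^ m * rr ^ 2 := by ring
    have e2 : rr ^ (m + 1) = rr ^ m * rr := by ring
    rw [e1, e2, h3]
    unfold lam
    linear_combination rr ^ m * key - 2 * Real.cos θ * rr ^ m * g θ (m + 1) * h2
  · subst h
    unfold wr er
    rw [if_neg (by omega), if_pos (by omega), if_pos (by omega), if_pos rfl]
    have e2 : rr ^ (m + 1) = rr ^ m * rr := by ring
    rw [e2]
    unfold lam
    linear_combination rr ^ m * key
      + (rr ^ m * g θ (m + 2) - 2 * Real.cos θ * rr ^ m * g θ (m + 1)) * h2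
  · rcases Nat.eq_or_lt_of_le (by omega : N + 1 ≤ m + 1) with h' | h'
    · have hm : m = N := by omega
      subst hm
      unfold wr er
      rw [if_neg (by omega), if_pos le_rfl, if_neg (by omega),
        if_neg (by omega), if_pos rfl]
      ring
    · unfold wr er
      rw [if_neg (by omega), if_neg (by omega), if_neg (by omega),
        if_neg (by omega), if_neg (by omega)]
      ring

end Weyl


end
section WeylVec

variable (θ : ℝ) (N : ℕ)

noncomputable def wf : V → ℂ := fun v => ((wr θ N v.length : ℝ) : ℂ)

lemma wf_sq_summable : Summable fun v : V => ‖wf θ N v‖ ^ 2 := by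
  apply summable_of_ne_finset_zero (s := (Finset.range (N + 1)).biUnion lvl)
  intro v hv
  have hlen : ¬ v.length ≤ N := by
    intro hle
    exact hv (Finset.mem_biUnion.mpr ⟨v.length, Finset.mem_range.mpr (by omega),
      (mem_lvl _ v).mpr rfl⟩)
  simp [wf, wr, hlen]

noncomputable def Phi : H := ⟨wf θ N, memℓp_of_sq (wf_sq_summable θ N)⟩

lemma Phi_coe : ∀ v : V, (Phi θ N) v = ((wr θ N v.length : ℝ) : ℂ) := fun _ => rfl

variable (L : H →L[ℂ] H)

lemma err_coe (hL' : ∀ (φ : H) (v : V), L φ v = φ (false :: v) + φ (true :: v) + par (⇑φ) v)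
    (hN : 1 ≤ N) (v : V) :
    (L (Phi θ N) - ((lam θ : ℝ) : ℂ) • Phi θ N) v = ((er θ N v.length : ℝ) : ℂ) := by
  rw [lp.coeFn_sub, Pi.sub_apply, lp.coeFn_smul, Pi.smul_apply, smul_eq_mul, hL' (Phi θ N) v]
  cases v with
  | nil =>
    have h := root_id θ N hN
    have hpar : par (⇑(Phi θ N)) [] = 0 := rfl
    rw [hpar]
    simp only [Phi_coe, List.length_cons, List.length_nil]
    rw [← h]
    push_cast
    ring
  | cons c u =>
    have h := main_rec θ N hN u.length
    have hpar : par (⇑(Phi θ N)) (c :: u) = (Phi θ N) u := rfl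
    rw [hpar]
    simp only [Phi_coe, List.length_cons]
    rw [← h]
    push_cast
    ring

lemma pow_half_mul (n : ℕ) : (2:ℝ) ^ n * (1/2) ^ n = 1 := by
  rw [← mul_pow]; norm_num

lemma rr_pow_sq (n : ℕ) : (rr ^ n) ^ 2 = (1/2) ^ n := by
  rw [← pow_mul, mul_comm n 2, pow_mul, rr_sq]

lemma err_norm (hL' : ∀ (φ : H) (v : V), L φ v = φ (false :: v) + φ (true :: v) + par (⇑φ) v)
    (hN : 1 ≤ N) :
    ‖L (Phi θ N) - ((lam θ : ℝ) : ℂ) • Phi θ N‖ ≤ 2 := by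
  set E : H := L (Phi θ N) - ((lam θ : ℝ) : ℂ) • Phi θ N with hE
  have hcoe : ∀ v : V, E v = ((er θ N v.length : ℝ) : ℂ) := err_coe θ N L hL' hN
  have hdisj : Disjoint (lvl N) (lvl (N + 1)) := by
    simp only [Finset.disjoint_left, mem_lvl]
    intro v h1 h2
    omega
  have h2 : ‖E‖ ^ 2 ≤ 4 := by
    rw [norm_sq_eq]
    rw [tsum_eq_sum (s := lvl N ∪ lvl (N + 1))
      (by
        intro v hv
        simp only [Finset.mem_union, mem_lvl] at hv
        push_neg at hv
        rw [hcoe v, er, if_neg hv.1, if_neg hv.2]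
        simp)]
    rw [Finset.sum_union hdisj]
    have hb1 : ∀ v ∈ lvl N, ‖E v‖ ^ 2 ≤ 2 * (1/2) ^ N := by
      intro v hv
      rw [hcoe v, (mem_lvl N v).mp hv, er, if_pos rfl]
      rw [Complex.norm_real, Real.norm_eq_abs, _root_.sq_abs, neg_sq]
      have e : (Real.sqrt 2 * rr ^ N * g θ (N + 1)) ^ 2
          = 2 * (1/2) ^ N * g θ (N + 1) ^ 2 := by
        rw [mul_pow, mul_pow, Real.sq_sqrt (by norm_num : (0:ℝ) ≤ 2), rr_pow_sq]
      rw [e]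
      have hp : (0:ℝ) < (1/2) ^ N := by positivity
      nlinarith [g_sq_le_one θ (N + 1)]
    have hb2 : ∀ v ∈ lvl (N + 1), ‖E v‖ ^ 2 ≤ (1/2) ^ N := by
      intro v hv
      rw [hcoe v, (mem_lvl (N + 1) v).mp hv, er, if_neg (by omega), if_pos rfl]
      rw [Complex.norm_real, Real.norm_eq_abs, _root_.sq_abs]
      have e : (rr ^ N * g θ N) ^ 2 = (1/2) ^ N * g θ N ^ 2 := by
        rw [mul_pow, rr_pow_sq]
      rw [e]
      have hp : (0:ℝ) < (1/2) ^ N := by positivity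
      nlinarith [g_sq_le_one θ N]
    have hs1 : ∑ v ∈ lvl N, ‖E v‖ ^ 2 ≤ 2 := by
      calc ∑ v ∈ lvl N, ‖E v‖ ^ 2 ≤ (lvl N).card • (2 * (1/2) ^ N) :=
            Finset.sum_le_card_nsmul _ _ _ hb1
        _ = 2 := by
            rw [card_lvl, nsmul_eq_mul]
            push_cast
            have := pow_half_mul N
            nlinarith [this]
    have hs2 : ∑ v ∈ lvl (N + 1), ‖E v‖ ^ 2 ≤ 2 := by
      calc ∑ v ∈ lvl (N + 1), ‖E v‖ ^ 2 ≤ (lvl (N + 1)).card • ((1/2) ^ N) :=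
            Finset.sum_le_card_nsmul _ _ _ hb2
        _ = 2 := by
            rw [card_lvl, nsmul_eq_mul]
            push_cast
            have := pow_half_mul N
            rw [pow_succ]
            nlinarith [this]
    linarith
  nlinarith [norm_nonneg E]

lemma phi_low : ∑ n ∈ Finset.range (N + 1), (g θ n) ^ 2 ≤ ‖Phi θ N‖ ^ 2 := by
  rw [norm_sq_eq]
  refine le_trans (le_of_eq ?_)
    (Summable.sum_le_tsum ((Finset.range (N + 1)).biUnion lvl) (fun v _ => by positivity)
      (sumsq (Phi θ N)))
  rw [Finset.sum_biUnion (by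
    intro x _ y _ hxy
    simp only [Finset.disjoint_left, mem_lvl]
    intro v h1 h2
    exact hxy (h1 ▸ h2 ▸ rfl))]
  refine Finset.sum_congr rfl (fun n hn => ?_)
  have hn' : n ≤ N := by
    have := Finset.mem_range.mp hn
    omega
  have hval : ∀ v ∈ lvl n, ‖(Phi θ N) v‖ ^ 2 = (1/2) ^ n * (g θ n) ^ 2 := by
    intro v hv
    rw [Phi_coe, (mem_lvl n v).mp hv, wr, if_pos hn', Complex.norm_real,
      Real.norm_eq_abs, _root_.sq_abs, mul_pow, rr_pow_sq]
  rw [Finset.sum_congr rfl hval, Finset.sum_const, card_lvl, nsmul_eq_mul]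
  push_cast
  have := pow_half_mul n
  nlinarith [this]

end WeylVec

lemma pair_ineq (θ a : ℝ) :
    Real.sin θ ^ 2 / 2 ≤ Real.sin a ^ 2 + Real.sin (a + θ) ^ 2 := by
  have h : Real.sin θ = Real.sin (a + θ) * Real.cos a - Real.cos (a + θ) * Real.sin a := by
    rw [← Real.sin_sub]
    congr 1
    ring
  have p1 := Real.sin_sq_add_cos_sq a
  have p2 := Real.sin_sq_add_cos_sq (a + θ)
  have hsq : Real.sin θ ^ 2
      = (Real.sin (a + θ) * Real.cos a - Real.cos (a + θ) * Real.sin a) ^ 2 := by rw [h]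
  nlinarith [hsq, sq_nonneg (Real.sin (a + θ) * Real.cos a + Real.cos (a + θ) * Real.sin a),
    mul_nonneg (sq_nonneg (Real.sin (a + θ))) (by nlinarith : (0:ℝ) ≤ 1 - Real.cos a ^ 2),
    mul_nonneg (sq_nonneg (Real.sin a)) (by nlinarith : (0:ℝ) ≤ 1 - Real.cos (a + θ) ^ 2)]

lemma pair_sum (θ : ℝ) (M : ℕ) :
    (M : ℝ) * (Real.sin θ ^ 2 / 2) ≤ ∑ n ∈ Finset.range (2 * M), (g θ n) ^ 2 := by
  induction M with
  | zero => simp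
  | succ M ih =>
    have h := pair_ineq θ ((2 * M + 1) * θ)
    have e1 : g θ (2 * M) = Real.sin ((2 * M + 1) * θ) := by
      unfold g
      push_cast
      ring_nf
    have e2 : g θ (2 * M + 1) = Real.sin ((2 * M + 1) * θ + θ) := by
      unfold g
      push_cast
      ring_nf
    rw [show 2 * (M + 1) = 2 * M + 1 + 1 by ring, Finset.sum_range_succ, Finset.sum_range_succ]
    rw [e1, e2] at *
    push_cast
    nlinarith [ih, h]

section Main

variable (L : H →L[ℂ] H)

set_option maxHeartbeats 1000000 in
lemma lam_mem (hL' : ∀ (φ : H) (v : V), L φ v = φ (false :: v) + φ (true :: v) + par (⇑φ) v)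
    (θ : ℝ) (hθ : Real.sin θ ≠ 0) :
    ((lam θ : ℝ) : ℂ) ∈ spectrum ℂ L := by
  by_contra hc
  rw [spectrum.notMem_iff] at hc
  obtain ⟨u, hu⟩ := hc
  set C := ‖((u⁻¹ : (H →L[ℂ] H)ˣ) : H →L[ℂ] H)‖ with hC
  have hCnn : 0 ≤ C := norm_nonneg _
  have hs : 0 < Real.sin θ ^ 2 / 2 := by positivity
  obtain ⟨M₀, hM₀⟩ := exists_nat_gt ((2 * C) ^ 2 / (Real.sin θ ^ 2 / 2))
  set M := M₀ + 1 with hM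
  set N := 2 * M - 1 with hNdef
  have hN1 : 1 ≤ N := by omega
  have hNM : N + 1 = 2 * M := by omega
  set Φ := Phi θ N with hΦ
  set E : H := L Φ - ((lam θ : ℝ) : ℂ) • Φ with hE
  have hEn : ‖E‖ ≤ 2 := err_norm θ N L hL' hN1
  have h1 : ((u : H →L[ℂ] H)) Φ = -E := by
    rw [hu]
    rw [ContinuousLinearMap.sub_apply, Algebra.algebraMap_eq_smul_one,
      ContinuousLinearMap.smul_apply, ContinuousLinearMap.one_apply, hE]
    abel
  have h2 : Φ = ((u⁻¹ : (H →L[ℂ] H)ˣ) : H →L[ℂ] H) (((u : H →L[ℂ] H)) Φ) := by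
    rw [← ContinuousLinearMap.mul_apply, Units.inv_mul, ContinuousLinearMap.one_apply]
  have hΦE : ‖Φ‖ ≤ C * ‖E‖ := by
    calc ‖Φ‖ = ‖((u⁻¹ : (H →L[ℂ] H)ˣ) : H →L[ℂ] H) (((u : H →L[ℂ] H)) Φ)‖ := by rw [← h2]
      _ ≤ C * ‖((u : H →L[ℂ] H)) Φ‖ := ContinuousLinearMap.le_opNorm _ _
      _ = C * ‖E‖ := by rw [h1, norm_neg]
  have hup : ‖Φ‖ ^ 2 ≤ (2 * C) ^ 2 := by
    have hstep : C * ‖E‖ ≤ C * 2 := mul_le_mul_of_nonneg_left hEn hCnn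
    nlinarith [norm_nonneg Φ, norm_nonneg E, hΦE, hstep, hCnn]
  have h3 : (M : ℝ) * (Real.sin θ ^ 2 / 2) ≤ ‖Φ‖ ^ 2 := by
    refine le_trans ?_ (phi_low θ N)
    rw [hNM]
    exact pair_sum θ M
  have h4 : ((2 * C) ^ 2 / (Real.sin θ ^ 2 / 2)) < (M : ℝ) := by
    have : (M₀ : ℝ) < M := by
      rw [hM]
      push_cast
      linarith
    linarith
  rw [div_lt_iff₀ hs] at h4
  nlinarith [h3, hup, h4]

end Main

end TreeProof

set_option synthInstance.maxHeartbeats 1000000 in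
set_option maxHeartbeats 1000000 in
theorem spectrum_L
    (L : lp (fun _ : List Bool => ℂ) 2 →L[ℂ] lp (fun _ : List Bool => ℂ) 2)
    (hL : ∀ (φ : lp (fun _ : List Bool => ℂ) 2) (v : List Bool),
      L φ v = ∑' w : {w : List Bool // TreeAdj v w}, φ w) :
    spectrum ℂ L = Complex.ofReal '' Set.Icc (-(2 * Real.sqrt 2)) (2 * Real.sqrt 2) := by
  have hL' : ∀ (φ : TreeProof.H) (v : TreeProof.V),
      L φ v = φ (false :: v) + φ (true :: v) + TreeProof.par (⇑φ) v := fun φ v => by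
    rw [hL φ v, TreeProof.tsum_adj]
  have h2s : (0:ℝ) < 2 * Real.sqrt 2 := by positivity
  haveI : Nontrivial (lp (fun _ : List Bool => ℂ) 2) := by
    refine nontrivial_of_ne (lp.single 2 ([] : List Bool) (1 : ℂ)) 0 (fun hc => ?_)
    have h1 := congrArg (fun f : lp (fun _ : List Bool => ℂ) 2 => f ([] : List Bool)) hc
    simp only [lp.single_apply_self, lp.coeFn_zero, Pi.zero_apply] at h1
    exact one_ne_zero h1
  apply subset_antisymm
  · intro z hz
    have hsa := TreeProof.selfAdjoint_L L hL'
    have hre := hsa.mem_spectrum_eq_re hz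
    refine ⟨z.re, ?_, hre.symm⟩
    have hn : ‖z‖ ≤ 2 * Real.sqrt 2 :=
      (spectrum.norm_le_norm_of_mem hz).trans (TreeProof.opNorm_bound L hL')
    rw [hre, Complex.norm_real, Real.norm_eq_abs] at hn
    exact Set.mem_Icc.mpr ⟨by linarith [(abs_le.mp hn).1], (abs_le.mp hn).2⟩
  · have hIoo : Complex.ofReal '' Set.Ioo (-(2 * Real.sqrt 2)) (2 * Real.sqrt 2)
        ⊆ spectrum ℂ L := by
      rintro z ⟨x, hx, rfl⟩
      set t := x / (2 * Real.sqrt 2) with ht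
      have ht1 : -1 < t := by
        rw [ht, lt_div_iff₀ h2s]
        nlinarith [hx.1]
      have ht2 : t < 1 := by
        rw [ht, div_lt_one h2s]
        exact hx.2
      set θ := Real.arccos t with hθdef
      have hcos : Real.cos θ = t := Real.cos_arccos (by linarith) (by linarith)
      have hsin : Real.sin θ ≠ 0 := by
        rw [hθdef, Real.sin_arccos]
        refine ne_of_gt (Real.sqrt_pos.mpr ?_)
        nlinarith
      have hmem := TreeProof.lam_mem L hL' θ hsin
      have hx' : TreeProof.lam θ = x := by
        show 2 * Real.sqrt 2 * Real.cos θ = x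
        rw [hcos, ht]
        field_simp
      rwa [hx'] at hmem
    have hclosed : IsClosed (spectrum ℂ L) := spectrum.isClosed L
    have hemb := Complex.isometry_ofReal.isClosedEmbedding
    have hne : -(2 * Real.sqrt 2) ≠ 2 * Real.sqrt 2 := by nlinarith
    have hIcc : (Complex.ofReal '' Set.Icc (-(2 * Real.sqrt 2)) (2 * Real.sqrt 2))
        = closure (Complex.ofReal '' Set.Ioo (-(2 * Real.sqrt 2)) (2 * Real.sqrt 2)) := by
      rw [hemb.closure_image_eq, closure_Ioo hne]
    rw [hIcc]
    exact closure_minimal hIoo hclosed
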